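/- Let A, B ∈ ℂ^{n×n} such that every eigenvalue λ of the pencil A^⋆ - λB satisfies |λ| < 1 and det B ≠ 0 (all eigenvalues lie strictly inside the unit circle). Then σ(A^⋆ - λB) is ⋆-reciprocal free, and consequently for each C ∈ ℂ^{n×n} the equation A X + X^⋆ B = C has at most one solution X ∈ ℂ^{n×n}. -/

import Mathlib

open Matrix

/-- `σ(Aᴴ - λB)` (with `∞` when `det B = 0`) is ⋆-reciprocal free. -/
def StarReciprocalFree {n : ℕ} (A B : Matrix (Fin n) (Fin n) ℂ) : Prop :=
  (∀ μ ν : ℂ, (Aᴴ - μ • B).det = 0 → (Aᴴ - ν • B).det = 0 →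
      μ * (starRingEnd ℂ ν) ≠ 1) ∧
  ¬((Aᴴ).det = 0 ∧ B.det = 0)

open Polynomial in
lemma my_eval_charpoly {n : ℕ} (M : Matrix (Fin n) (Fin n) ℂ) (x : ℂ) :
    (M.charpoly).eval x = (x • (1 : Matrix (Fin n) (Fin n) ℂ) - M).det := by
  rw [Matrix.charpoly, ← coe_evalRingHom, RingHom.map_det]
  congr 1
  ext i j
  by_cases h : i = j <;>
    simp [h, Matrix.charmatrix_apply, Matrix.smul_apply, Matrix.one_apply, Matrix.sub_apply,
      Matrix.diagonal_apply]

lemma my_key_prod {n : ℕ} (S V : Matrix (Fin n) (Fin n) ℂ) (hV : V = Sᴴ * V * S) :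
    ∀ l : List ℂ,
      (l.map (fun c => Sᴴ - (starRingEnd ℂ c) • 1)).prod * V * S ^ l.length
        = V * (l.map (fun c => 1 - (starRingEnd ℂ c) • S)).prod := by
  intro l
  induction l with
  | nil => simp
  | cons a l ih =>
    have hcomm : Commute S ((l.map (fun c => 1 - (starRingEnd ℂ c) • S)).prod) := by
      apply Commute.list_prod_right
      intro x hx
      simp only [List.mem_map] at hx
      obtain ⟨c, _, rfl⟩ := hx
      exact ((Commute.one_right S).sub_right (((Commute.refl S).smul_right _)))
    simp only [List.map_cons, List.prod_cons, List.length_cons, pow_succ]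
    calc (Sᴴ - (starRingEnd ℂ a) • 1) * (l.map (fun c => Sᴴ - (starRingEnd ℂ c) • 1)).prod *
            V * (S ^ l.length * S)
        = (Sᴴ - (starRingEnd ℂ a) • 1) *
            ((l.map (fun c => Sᴴ - (starRingEnd ℂ c) • 1)).prod * V * S ^ l.length) * S := by
          noncomm_ring
      _ = (Sᴴ - (starRingEnd ℂ a) • 1) *
            (V * (l.map (fun c => 1 - (starRingEnd ℂ c) • S)).prod) * S := by rw [ih]
      _ = ((Sᴴ - (starRingEnd ℂ a) • 1) * V * S) *
            (l.map (fun c => 1 - (starRingEnd ℂ c) • S)).prod := by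
          rw [Matrix.mul_assoc, Matrix.mul_assoc, Matrix.mul_assoc, hcomm.eq,
            Matrix.mul_assoc]
      _ = (V * (1 - (starRingEnd ℂ a) • S)) *
            (l.map (fun c => 1 - (starRingEnd ℂ c) • S)).prod := by
          congr 1
          rw [Matrix.sub_mul, Matrix.sub_mul, ← hV]
          rw [Matrix.mul_sub, Matrix.mul_one]
          congr 1
          rw [Matrix.smul_mul, Matrix.one_mul, Matrix.smul_mul, Matrix.mul_smul]
      _ = V * ((1 - (starRingEnd ℂ a) • S) *
            (l.map (fun c => 1 - (starRingEnd ℂ c) • S)).prod) := by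
          rw [Matrix.mul_assoc]

lemma my_conj_prod {n : ℕ} (S : Matrix (Fin n) (Fin n) ℂ) :
    ∀ l : List ℂ, ((l.map (fun c => S - c • 1)).prod)ᴴ
      = (l.map (fun c => Sᴴ - (starRingEnd ℂ c) • 1)).prod := by
  intro l
  induction l with
  | nil => simp
  | cons a l ih =>
    have hcomm : Commute (Sᴴ - (starRingEnd ℂ a) • 1)
        ((l.map (fun c => Sᴴ - (starRingEnd ℂ c) • 1)).prod) := by
      apply Commute.list_prod_right
      intro x hx
      simp only [List.mem_map] at hx
      obtain ⟨c, _, rfl⟩ := hx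
      have h1 : Commute (Sᴴ) ((starRingEnd ℂ c) • (1 : Matrix (Fin n) (Fin n) ℂ)) :=
        (Commute.one_right Sᴴ).smul_right _
      have h2 : Commute ((starRingEnd ℂ a) • (1 : Matrix (Fin n) (Fin n) ℂ)) Sᴴ :=
        ((Commute.one_left Sᴴ).smul_left _)
      have h3 : Commute ((starRingEnd ℂ a) • (1 : Matrix (Fin n) (Fin n) ℂ))
          ((starRingEnd ℂ c) • (1 : Matrix (Fin n) (Fin n) ℂ)) :=
        Commute.smul_right (Commute.smul_left (Commute.refl (1 : Matrix (Fin n) (Fin n) ℂ)) _) _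
      exact Commute.sub_left (Commute.sub_right (Commute.refl Sᴴ) h1) (Commute.sub_right h2 h3)
    simp only [List.map_cons, List.prod_cons]
    rw [Matrix.conjTranspose_mul, ih, Matrix.conjTranspose_sub, Matrix.conjTranspose_smul,
      Matrix.conjTranspose_one]
    simp only [← starRingEnd_apply]
    exact (Commute.eq (Commute.symm hcomm))

theorem stable_pencil_unique_solution
    (n : ℕ) (A B : Matrix (Fin n) (Fin n) ℂ)
    (hB : B.det ≠ 0)
    (hstab : ∀ lam : ℂ, (Aᴴ - lam • B).det = 0 → ‖lam‖ < 1) :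
    StarReciprocalFree A B ∧
    ∀ C X₁ X₂ : Matrix (Fin n) (Fin n) ℂ,
      A * X₁ + X₁ᴴ * B = C → A * X₂ + X₂ᴴ * B = C → X₁ = X₂ := by
  constructor
  · refine ⟨fun μ ν h1 h2 heq => ?_, fun h => hB h.2⟩
    have hμ := hstab μ h1
    have hν := hstab ν h2
    have : ‖μ * (starRingEnd ℂ ν)‖ < 1 := by
      rw [norm_mul, Complex.norm_conj]
      nlinarith [norm_nonneg μ, norm_nonneg ν]
    rw [heq] at this
    simp at this
  · intro C X₁ X₂ h1 h2
    set W := X₁ - X₂ with hWdef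
    have hW : A * W + Wᴴ * B = 0 := by
      have : A * W + Wᴴ * B = (A * X₁ + X₁ᴴ * B) - (A * X₂ + X₂ᴴ * B) := by
        simp only [hWdef, Matrix.mul_sub, Matrix.conjTranspose_sub, Matrix.sub_mul]
        abel
      rw [this, h1, h2, sub_self]
    -- setup
    set S : Matrix (Fin n) (Fin n) ℂ := B⁻¹ * Aᴴ with hSdef
    set V : Matrix (Fin n) (Fin n) ℂ := Bᴴ * W with hVdef
    have hBH : (Bᴴ).det ≠ 0 := by
      rw [Matrix.det_conjTranspose]
      simpa using hB
    have hBinv : B * B⁻¹ = 1 := Matrix.mul_nonsing_inv B (isUnit_iff_ne_zero.mpr hB)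
    have hBinv' : B⁻¹ * B = 1 := Matrix.nonsing_inv_mul B (isUnit_iff_ne_zero.mpr hB)
    have hSH : Sᴴ = A * (Bᴴ)⁻¹ := by
      rw [hSdef, Matrix.conjTranspose_mul, Matrix.conjTranspose_conjTranspose,
        Matrix.conjTranspose_nonsing_inv]
    have hBHinv : (Bᴴ)⁻¹ * Bᴴ = 1 := Matrix.nonsing_inv_mul _ (isUnit_iff_ne_zero.mpr hBH)
    have hAW : A * W = -(Wᴴ * B) := eq_neg_of_add_eq_zero_left hW
    have hBW : Bᴴ * W = -(Wᴴ * Aᴴ) := by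
      have := congrArg Matrix.conjTranspose hW
      simp only [Matrix.conjTranspose_add, Matrix.conjTranspose_mul,
        Matrix.conjTranspose_conjTranspose, Matrix.conjTranspose_zero] at this
      -- this : Wᴴ * Aᴴ + Bᴴ * W = 0
      exact eq_neg_of_add_eq_zero_right this
    have hV : V = Sᴴ * V * S := by
      rw [hVdef, hSH, hSdef]
      calc Bᴴ * W = -(Wᴴ * Aᴴ) := hBW
        _ = -(Wᴴ * (B * B⁻¹) * Aᴴ) := by rw [hBinv, Matrix.mul_one]
        _ = (-(Wᴴ * B)) * (B⁻¹ * Aᴴ) := by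
            simp only [Matrix.neg_mul, Matrix.mul_assoc]
        _ = (A * W) * (B⁻¹ * Aᴴ) := by rw [← hAW]
        _ = A * ((Bᴴ)⁻¹ * Bᴴ) * W * (B⁻¹ * Aᴴ) := by rw [hBHinv, Matrix.mul_one]
        _ = A * (Bᴴ)⁻¹ * (Bᴴ * W) * (B⁻¹ * Aᴴ) := by
            simp only [Matrix.mul_assoc]
    -- all roots of charpoly S are in the open unit disk
    have hroot : ∀ μ : ℂ, (Matrix.charpoly S).eval μ = 0 → ‖μ‖ < 1 := by
      intro μ hμ
      rw [my_eval_charpoly] at hμ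
      apply hstab
      have hfac : Aᴴ - μ • B = B * (-(1:ℂ)) • (μ • (1 : Matrix (Fin n) (Fin n) ℂ) - S) := by
        rw [Matrix.mul_smul, Matrix.mul_sub, Matrix.mul_smul, Matrix.mul_one, hSdef,
          ← Matrix.mul_assoc, hBinv, Matrix.one_mul]
        simp [smul_sub]
        exact sub_eq_neg_add _ _
      rw [hfac, Matrix.det_mul, Matrix.det_smul, hμ]
      ring
    -- Cayley-Hamilton as a list product
    set l : List ℂ := (Matrix.charpoly S).roots.toList with hldef
    have hmem : ∀ c ∈ l, ‖c‖ < 1 := by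
      intro c hc
      apply hroot
      have : c ∈ (Matrix.charpoly S).roots := by
        rwa [← Multiset.mem_toList]
      exact Polynomial.isRoot_of_mem_roots this
    have hCH : (l.map (fun c => S - c • 1)).prod = 0 := by
      have hsplit := Polynomial.Splits.eq_prod_roots_of_monic
        (IsAlgClosed.splits (Matrix.charpoly S)) (Matrix.charpoly_monic S)
      have := Matrix.aeval_self_charpoly S
      rw [hsplit] at this
      rw [← Multiset.coe_toList (Matrix.charpoly S).roots, Multiset.map_coe,
        Multiset.prod_coe] at this
      rw [map_list_prod (Polynomial.aeval S)] at this
      rw [← this]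
      congr 1
      rw [List.map_map]
      apply List.map_congr_left
      intro c _
      simp [Algebra.algebraMap_eq_smul_one]
    have hP : (l.map (fun c => Sᴴ - (starRingEnd ℂ c) • 1)).prod = 0 := by
      rw [← my_conj_prod, hCH, Matrix.conjTranspose_zero]
    have hVQ : V * (l.map (fun c => 1 - (starRingEnd ℂ c) • S)).prod = 0 := by
      rw [← my_key_prod S V hV l, hP, Matrix.zero_mul, Matrix.zero_mul]
    -- the product on the right is invertible
    have hdetfac : ∀ c ∈ l, ((1 : Matrix (Fin n) (Fin n) ℂ) - (starRingEnd ℂ c) • S).det ≠ 0 := by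
      intro c hc hdet
      set d : ℂ := starRingEnd ℂ c with hddef
      have hd : ‖d‖ < 1 := by
        rw [hddef, Complex.norm_conj]; exact hmem c hc
      by_cases hd0 : d = 0
      · rw [hd0] at hdet; simp at hdet
      · have hfac : (1 : Matrix (Fin n) (Fin n) ℂ) - d • S
            = d • (d⁻¹ • (1 : Matrix (Fin n) (Fin n) ℂ) - S) := by
          rw [smul_sub, smul_smul, mul_inv_cancel₀ hd0, one_smul]
        rw [hfac, Matrix.det_smul] at hdet
        have hd' : (d : ℂ) ^ Fintype.card (Fin n) ≠ 0 := pow_ne_zero _ hd0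
        have : ((d⁻¹ • (1 : Matrix (Fin n) (Fin n) ℂ) - S)).det = 0 := by
          rcases mul_eq_zero.mp hdet with h | h
          · exact absurd h hd'
          · exact h
        have habs : ‖d⁻¹‖ < 1 := by
          apply hroot
          rw [my_eval_charpoly]
          exact this
        have hone : (1:ℝ) = ‖d‖ * ‖d⁻¹‖ := by
          rw [← norm_mul, mul_inv_cancel₀ hd0, norm_one]
        nlinarith [norm_nonneg d, norm_nonneg d⁻¹]
    have hdetQ : ((l.map (fun c => 1 - (starRingEnd ℂ c) • S)).prod).det ≠ 0 := by
      rw [← Matrix.coe_detMonoidHom, map_list_prod]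
      rw [List.map_map]
      apply List.prod_ne_zero
      intro h0
      simp only [List.mem_map, Function.comp, ← Matrix.coe_detMonoidHom] at h0
      obtain ⟨c, hc, hcc⟩ := h0
      exact hdetfac c hc hcc
    have hVzero : V = 0 := by
      set Q := (l.map (fun c => 1 - (starRingEnd ℂ c) • S)).prod with hQ
      have : V * Q * Q⁻¹ = 0 := by rw [hVQ, Matrix.zero_mul]
      rwa [Matrix.mul_assoc, Matrix.mul_nonsing_inv Q (isUnit_iff_ne_zero.mpr hdetQ), Matrix.mul_one] at this
    have hWzero : W = 0 := by
      have : (Bᴴ)⁻¹ * V = W := by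
        rw [hVdef, ← Matrix.mul_assoc, hBHinv, Matrix.one_mul]
      rw [← this, hVzero, Matrix.mul_zero]
    exact sub_eq_zero.mp hWzero
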